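/- arXiv:cs/0207027 — 2 statements merged into one kernel-verified Lean document; each statement's English description precedes it below -/
import Mathlib

section
/- Fix N ≥ 1, l ∈ {0,…,N−1}, and k ∈ {l+1,…,N−1}. For a uniformly random permutation σ of {0,…,N−1}, the probability that OCS(σ) has at least l+1 entries and that the sum s_l of its first l+1 entries equals k is at most (−log(1 − k/N))^l / (l!·N) (with natural logarithm); moreover this probability is 0 when k ≤ l. -/
/-- The set of minimal elements of the cycles of a permutation of `Fin N`
(one per cycle, fixed points included). -/
noncomputable def cycleMins {N : ℕ} (σ : Equiv.Perm (Fin N)) : Finset (Fin N) :=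
  @Finset.filter _ (fun x => ∀ m : ℕ, x ≤ (σ ^ m) x) (Classical.decPred _) Finset.univ

/-- The ordered cycle structure of a permutation of `Fin N`: the list of lengths of its
cycles (fixed points counting as cycles of length 1), listed in increasing order of the
minimal elements of the cycles. -/
noncomputable def OCS {N : ℕ} (σ : Equiv.Perm (Fin N)) : List ℕ :=
  ((cycleMins σ).sort (· ≤ ·)).map fun x => Function.minimalPeriod (⇑σ) x

open Equiv Function Finset

lemma mp_pos {α : Type*} [Fintype α] [DecidableEq α] (σ : Equiv.Perm α) (x : α) :
    0 < Function.minimalPeriod (⇑σ) x := by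
  apply Function.IsPeriodicPt.minimalPeriod_pos (orderOf_pos σ)
  rw [Function.IsPeriodicPt, Function.IsFixedPt, Equiv.Perm.iterate_eq_pow, pow_orderOf_eq_one]
  rfl

lemma mem_cycleMins {N : ℕ} {σ : Equiv.Perm (Fin N)} {x : Fin N} :
    x ∈ cycleMins σ ↔ ∀ m : ℕ, x ≤ (σ ^ m) x := by
  classical
  rw [cycleMins]
  rw [Finset.mem_filter]
  simp

lemma zero_mem_cycleMins {N : ℕ} [NeZero N] (σ : Equiv.Perm (Fin N)) :
    (0 : Fin N) ∈ cycleMins σ :=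
  mem_cycleMins.2 fun m => Fin.zero_le _

lemma OCS_entries_pos {N : ℕ} {σ : Equiv.Perm (Fin N)} {c : ℕ} (hc : c ∈ OCS σ) : 1 ≤ c := by
  rw [OCS, List.mem_map] at hc
  obtain ⟨x, -, rfl⟩ := hc
  exact mp_pos σ x

lemma OCS_length {N : ℕ} (σ : Equiv.Perm (Fin N)) : (OCS σ).length = (cycleMins σ).card := by
  rw [OCS, List.length_map, Finset.length_sort]

section
variable {N : ℕ} [NeZero N]

/-- orbit of 0 -/
noncomputable def Oset (σ : Equiv.Perm (Fin N)) : Finset (Fin N) :=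
  (Finset.range (Function.minimalPeriod (⇑σ) 0)).image fun m => (σ ^ m) 0

lemma mem_Oset {σ : Equiv.Perm (Fin N)} {x : Fin N} :
    x ∈ Oset σ ↔ ∃ m < Function.minimalPeriod (⇑σ) 0, (σ ^ m) 0 = x := by
  simp [Oset]

lemma pow_mp_zero (σ : Equiv.Perm (Fin N)) :
    (σ ^ Function.minimalPeriod (⇑σ) 0) 0 = 0 := by
  have := Function.isPeriodicPt_minimalPeriod (⇑σ) 0
  rwa [Function.IsPeriodicPt, Function.IsFixedPt, Equiv.Perm.iterate_eq_pow] at this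

lemma mp_pos' {α : Type*} [Fintype α] [DecidableEq α] (σ : Equiv.Perm α) (x : α) :
    0 < Function.minimalPeriod (⇑σ) x := by
  apply Function.IsPeriodicPt.minimalPeriod_pos (orderOf_pos σ)
  rw [Function.IsPeriodicPt, Function.IsFixedPt, Equiv.Perm.iterate_eq_pow, pow_orderOf_eq_one]
  rfl

lemma pow_zero_mem_Oset (σ : Equiv.Perm (Fin N)) (m : ℕ) : (σ ^ m) 0 ∈ Oset σ := by
  rcases Nat.lt_or_ge m (Function.minimalPeriod (⇑σ) 0) with h | h
  · exact mem_Oset.2 ⟨m, h, rfl⟩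
  · -- reduce mod the period
    have : (σ ^ m) 0 = (σ ^ (m % Function.minimalPeriod (⇑σ) 0)) 0 := by
      conv_lhs => rw [← Nat.mod_add_div m (Function.minimalPeriod (⇑σ) 0)]
      rw [pow_add, Equiv.Perm.mul_apply]
      congr 1
      have hp := (Function.isPeriodicPt_minimalPeriod (⇑σ) 0).mul_const
        (m / Function.minimalPeriod (⇑σ) 0)
      rwa [Function.IsPeriodicPt, Function.IsFixedPt, Equiv.Perm.iterate_eq_pow] at hp
    rw [this]
    exact mem_Oset.2 ⟨_, Nat.mod_lt _ (mp_pos' σ 0), rfl⟩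

lemma zero_mem_Oset (σ : Equiv.Perm (Fin N)) : (0 : Fin N) ∈ Oset σ := by
  simpa using pow_zero_mem_Oset σ 0

lemma Oset_card (σ : Equiv.Perm (Fin N)) :
    (Oset σ).card = Function.minimalPeriod (⇑σ) 0 := by
  rw [Oset, Finset.card_image_of_injOn, Finset.card_range]
  intro i hi j hj hij
  have := Function.iterate_injOn_Iio_minimalPeriod (f := ⇑σ) (x := (0 : Fin N))
  apply this
  · simpa using Finset.mem_range.1 hi
  · simpa using Finset.mem_range.1 hj
  · simpa [Equiv.Perm.iterate_eq_pow] using hij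

lemma apply_mem_Oset_iff {σ : Equiv.Perm (Fin N)} {x : Fin N} :
    σ x ∈ Oset σ ↔ x ∈ Oset σ := by
  constructor
  · rintro h
    obtain ⟨m, hm, hx⟩ := mem_Oset.1 h
    rcases Nat.eq_zero_or_pos m with rfl | hmpos
    · simp only [pow_zero, Equiv.Perm.coe_one, id_eq] at hx
      have h2 : σ ((σ ^ (Function.minimalPeriod (⇑σ) 0 - 1)) 0) = σ x := by
        rw [← Equiv.Perm.mul_apply, ← pow_succ',
          show Function.minimalPeriod (⇑σ) 0 - 1 + 1 = Function.minimalPeriod (⇑σ) 0 from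
            Nat.succ_pred_eq_of_pos (mp_pos' σ 0), pow_mp_zero]
        exact hx
      rw [← σ.injective h2]
      exact pow_zero_mem_Oset σ _
    · have h2 : σ ((σ ^ (m - 1)) 0) = σ x := by
        rw [← Equiv.Perm.mul_apply, ← pow_succ',
          show m - 1 + 1 = m from Nat.succ_pred_eq_of_pos hmpos]
        exact hx
      rw [← σ.injective h2]
      exact pow_zero_mem_Oset σ _
  · rintro h
    obtain ⟨m, hm, rfl⟩ := mem_Oset.1 h
    have : σ ((σ ^ m) 0) = (σ ^ (m+1)) 0 := by rw [pow_succ', Equiv.Perm.mul_apply]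
    rw [this]; exact pow_zero_mem_Oset σ _

/-- complement of the orbit of 0 -/
noncomputable def Cset (σ : Equiv.Perm (Fin N)) : Finset (Fin N) := (Oset σ)ᶜ

lemma Cset_card (σ : Equiv.Perm (Fin N)) :
    (Cset σ).card = N - Function.minimalPeriod (⇑σ) 0 := by
  rw [Cset, Finset.card_compl, Oset_card, Fintype.card_fin]

lemma apply_mem_Cset_iff {σ : Equiv.Perm (Fin N)} {x : Fin N} :
    x ∈ Cset σ ↔ σ x ∈ Cset σ := by
  simp only [Cset, Finset.mem_compl]
  exact not_congr (apply_mem_Oset_iff).symm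

noncomputable def restrCore (σ : Equiv.Perm (Fin N)) : Equiv.Perm {x : Fin N // x ∈ Cset σ} :=
  σ.subtypePerm fun x => apply_mem_Cset_iff.symm

noncomputable def eIso (σ : Equiv.Perm (Fin N)) :
    Fin (N - Function.minimalPeriod (⇑σ) 0) ≃o {x : Fin N // x ∈ Cset σ} :=
  (Cset σ).orderIsoOfFin (Cset_card σ)

noncomputable def restr (σ : Equiv.Perm (Fin N)) :
    Equiv.Perm (Fin (N - Function.minimalPeriod (⇑σ) 0)) :=
  ((eIso σ).toEquiv.permCongr).symm (restrCore σ)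

lemma eIso_restr_apply (σ : Equiv.Perm (Fin N)) (y : Fin (N - Function.minimalPeriod (⇑σ) 0)) :
    ((eIso σ) ((restr σ) y) : Fin N) = σ ((eIso σ) y : Fin N) := by
  simp [restr, Equiv.permCongr, Equiv.equivCongr, restrCore, Equiv.Perm.subtypePerm]

lemma eIso_restr_pow_apply (σ : Equiv.Perm (Fin N)) (m : ℕ)
    (y : Fin (N - Function.minimalPeriod (⇑σ) 0)) :
    ((eIso σ) ((restr σ ^ m) y) : Fin N) = (σ ^ m) ((eIso σ) y : Fin N) := by
  induction m with
  | zero => simp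
  | succ d ih =>
      rw [pow_succ', pow_succ', Equiv.Perm.mul_apply, Equiv.Perm.mul_apply,
        eIso_restr_apply, ih]

lemma mp_restr (σ : Equiv.Perm (Fin N)) (y : Fin (N - Function.minimalPeriod (⇑σ) 0)) :
    Function.minimalPeriod (⇑(restr σ)) y = Function.minimalPeriod (⇑σ) ((eIso σ) y : Fin N) := by
  have key : ∀ n : ℕ, Function.IsPeriodicPt (⇑(restr σ)) n y ↔
      Function.IsPeriodicPt (⇑σ) n ((eIso σ) y : Fin N) := by
    intro n
    rw [Function.IsPeriodicPt, Function.IsFixedPt, Equiv.Perm.iterate_eq_pow,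
      Function.IsPeriodicPt, Function.IsFixedPt, Equiv.Perm.iterate_eq_pow]
    constructor
    · intro h
      rw [← eIso_restr_pow_apply, h]
    · intro h
      have : ((eIso σ) ((restr σ ^ n) y) : Fin N) = ((eIso σ) y : Fin N) := by
        rw [eIso_restr_pow_apply, h]
      exact (eIso σ).injective (Subtype.ext this)
  apply le_antisymm
  · exact Function.IsPeriodicPt.minimalPeriod_le (mp_pos' σ _)
      ((key _).2 (Function.isPeriodicPt_minimalPeriod (⇑σ) _))
  · exact Function.IsPeriodicPt.minimalPeriod_le (mp_pos' (restr σ) _)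
      ((key _).1 (Function.isPeriodicPt_minimalPeriod (⇑(restr σ)) _))

lemma mem_cycleMins_restr {σ : Equiv.Perm (Fin N)} {y : Fin (N - Function.minimalPeriod (⇑σ) 0)} :
    y ∈ cycleMins (restr σ) ↔ ((eIso σ) y : Fin N) ∈ cycleMins σ := by
  rw [mem_cycleMins, mem_cycleMins]
  apply forall_congr'
  intro m
  rw [← eIso_restr_pow_apply]
  constructor
  · intro h
    exact Subtype.coe_le_coe.2 ((eIso σ).le_iff_le.2 h)
  · intro h
    exact (eIso σ).le_iff_le.1 (Subtype.coe_le_coe.1 h)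

lemma cycleMins_inter_Oset {σ : Equiv.Perm (Fin N)} {x : Fin N}
    (hx : x ∈ cycleMins σ) (hO : x ∈ Oset σ) : x = 0 := by
  obtain ⟨m, hm, rfl⟩ := mem_Oset.1 hO
  have h1 : ((σ ^ (Function.minimalPeriod (⇑σ) 0 - m)) ((σ ^ m) 0)) = 0 := by
    rw [← Equiv.Perm.mul_apply, ← pow_add,
      show Function.minimalPeriod (⇑σ) 0 - m + m = Function.minimalPeriod (⇑σ) 0 by omega,
      pow_mp_zero]
  have h2 := mem_cycleMins.1 hx (Function.minimalPeriod (⇑σ) 0 - m)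
  rw [h1] at h2
  exact le_antisymm h2 (Fin.zero_le _)

lemma cycleMins_eq_insert (σ : Equiv.Perm (Fin N)) :
    cycleMins σ = insert 0 ((cycleMins (restr σ)).image fun y => ((eIso σ) y : Fin N)) := by
  apply Finset.ext
  intro x
  simp only [Finset.mem_insert, Finset.mem_image]
  constructor
  · intro hx
    by_cases h0 : x = 0
    · exact Or.inl h0
    · have hC : x ∈ Cset σ := by
        rw [Cset, Finset.mem_compl]
        intro hO
        exact h0 (cycleMins_inter_Oset hx hO)
      refine Or.inr ⟨(eIso σ).symm ⟨x, hC⟩, ?_, ?_⟩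
      · rw [mem_cycleMins_restr]
        simpa using hx
      · simp
  · rintro (rfl | ⟨y, hy, rfl⟩)
    · exact zero_mem_cycleMins σ
    · exact mem_cycleMins_restr.1 hy

lemma zero_not_mem_image (σ : Equiv.Perm (Fin N)) :
    (0 : Fin N) ∉ (cycleMins (restr σ)).image fun y => ((eIso σ) y : Fin N) := by
  simp only [Finset.mem_image, not_exists]
  rintro y ⟨-, hy⟩
  have hC : ((eIso σ) y : Fin N) ∈ Cset σ := ((eIso σ) y).2
  rw [hy, Cset, Finset.mem_compl] at hC
  exact hC (zero_mem_Oset σ)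

lemma OCS_restr (σ : Equiv.Perm (Fin N)) :
    OCS σ = Function.minimalPeriod (⇑σ) 0 :: OCS (restr σ) := by
  classical
  set f : Fin (N - Function.minimalPeriod (⇑σ) 0) → Fin N := fun y => ((eIso σ) y : Fin N)
    with hf
  have hfmono : Monotone f := fun a b hab => Subtype.coe_le_coe.2 ((eIso σ).le_iff_le.2 hab)
  have hfinj : Function.Injective f := fun a b hab => (eIso σ).injective (Subtype.ext hab)
  set M : Finset (Fin N) := (cycleMins (restr σ)).image f with hM
  have hsort1 : (cycleMins σ).sort (· ≤ ·) = 0 :: M.sort (· ≤ ·) := by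
    rw [cycleMins_eq_insert σ]
    exact Finset.sort_insert _ (fun b _ => Fin.zero_le b) (zero_not_mem_image σ)
  have hsort2 : M.sort (· ≤ ·) = ((cycleMins (restr σ)).sort (· ≤ ·)).map f := by
    refine (fun hp h1 h2 => List.Perm.eq_of_pairwise' (r := (· ≤ · : Fin N → Fin N → Prop)) h1 h2 hp) ?_ ?_ ?_
    · apply Multiset.coe_eq_coe.1
      rw [Finset.sort_eq, hM, Finset.image_val_of_injOn (hfinj.injOn)]
      rw [show ((((cycleMins (restr σ)).sort (· ≤ ·)).map f : List (Fin N)) : Multiset (Fin N))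
          = Multiset.map f (((cycleMins (restr σ)).sort (· ≤ ·)) : List _) from
        (Multiset.map_coe f _).symm]
      rw [Finset.sort_eq]
    · exact Finset.pairwise_sort _ _
    · exact List.Pairwise.map f (fun a b hab => hfmono hab)
        (Finset.pairwise_sort _ _)
  rw [OCS, hsort1, List.map_cons, hsort2, List.map_map]
  congr 1
  rw [OCS]
  apply List.map_congr_left
  intro y hy
  simp only [Function.comp_apply]
  exact (mp_restr σ y).symm


noncomputable def restrA (a : ℕ) (σ : Equiv.Perm (Fin N)) : Equiv.Perm (Fin (N - a)) :=
  if h : Function.minimalPeriod (⇑σ) 0 = a then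
    ((finCongr (by rw [h]) :
      Fin (N - Function.minimalPeriod (⇑σ) 0) ≃ Fin (N - a)).permCongr) (restr σ)
  else 1

lemma restrA_self (σ : Equiv.Perm (Fin N)) :
    restrA (Function.minimalPeriod (⇑σ) 0) σ = restr σ := by
  rw [restrA, dif_pos rfl]
  ext y
  simp [Fin.ext_iff]

lemma OCS_restrA (σ : Equiv.Perm (Fin N)) {a : ℕ} (h : Function.minimalPeriod (⇑σ) 0 = a) :
    OCS σ = a :: OCS (restrA a σ) := by
  subst h
  rw [restrA_self, OCS_restr σ]

lemma emb_congr {α : Type*} [LinearOrder α] {s t : Finset α} {n : ℕ} (h : s = t)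
    (hs : s.card = n) (ht : t.card = n) : s.orderEmbOfFin hs = t.orderEmbOfFin ht := by
  subst h; rfl

lemma apply_orderEmbOfFin (σ : Equiv.Perm (Fin N)) {a : ℕ}
    (h : Function.minimalPeriod (⇑σ) 0 = a)
    (hca : (Cset σ).card = N - a) (y : Fin (N - a)) :
    σ ((Cset σ).orderEmbOfFin hca y) = (Cset σ).orderEmbOfFin hca ((restrA a σ) y) := by
  subst h
  rw [restrA_self]
  have key : ∀ z, (Cset σ).orderEmbOfFin hca z = ((eIso σ) z : Fin N) := by
    intro z
    rfl
  rw [key, key, eIso_restr_apply]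

lemma card_mp_and (a : ℕ) (ha : 1 ≤ a) (Q : Equiv.Perm (Fin (N - a)) → Prop) :
    Nat.card {σ : Equiv.Perm (Fin N) //
        Function.minimalPeriod (⇑σ) 0 = a ∧ Q (restrA a σ)} ≤
      (N-1).descFactorial (a-1) * Nat.card {τ : Equiv.Perm (Fin (N - a)) // Q τ} := by
  classical
  set D := {x : Fin N // x ≠ 0}
  have keyinj : ∀ (σ : Equiv.Perm (Fin N)), Function.minimalPeriod (⇑σ) 0 = a →
      ∀ i j : Fin (a-1), (σ ^ ((i : ℕ)+1)) 0 = (σ ^ ((j : ℕ)+1)) 0 → i = j := by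
    intro σ h1 i j hij
    have hi1 : (i : ℕ)+1 ∈ Set.Iio (Function.minimalPeriod (⇑σ) 0) :=
      Set.mem_Iio.2 (by rw [h1]; have := i.isLt; omega)
    have hj1 : (j : ℕ)+1 ∈ Set.Iio (Function.minimalPeriod (⇑σ) 0) :=
      Set.mem_Iio.2 (by rw [h1]; have := j.isLt; omega)
    have := Function.iterate_injOn_Iio_minimalPeriod (f := ⇑σ) (x := (0 : Fin N))
      hi1 hj1 (by simpa [Equiv.Perm.iterate_eq_pow, pow_succ, Equiv.Perm.mul_apply] using hij)
    ext
    omega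
  have keyne : ∀ (σ : Equiv.Perm (Fin N)), Function.minimalPeriod (⇑σ) 0 = a →
      ∀ i : Fin (a-1), (σ ^ ((i : ℕ)+1)) 0 ≠ 0 := by
    intro σ h1 i hi
    have hi1 : (i : ℕ)+1 ∈ Set.Iio (Function.minimalPeriod (⇑σ) 0) :=
      Set.mem_Iio.2 (by rw [h1]; have := i.isLt; omega)
    have h01 : (0:ℕ) ∈ Set.Iio (Function.minimalPeriod (⇑σ) 0) :=
      Set.mem_Iio.2 (by rw [h1]; omega)
    have := Function.iterate_injOn_Iio_minimalPeriod (f := ⇑σ) (x := (0 : Fin N))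
      hi1 h01 (by simpa [Equiv.Perm.iterate_eq_pow, pow_succ, Equiv.Perm.mul_apply] using hi)
    omega
  set Φ : {σ : Equiv.Perm (Fin N) //
      Function.minimalPeriod (⇑σ) 0 = a ∧ Q (restrA a σ)} →
      (Fin (a-1) ↪ D) × {τ : Equiv.Perm (Fin (N - a)) // Q τ} :=
    fun s => (⟨fun i => ⟨(s.1 ^ ((i : ℕ)+1)) 0, keyne s.1 s.2.1 i⟩,
        fun i j hij => keyinj s.1 s.2.1 i j (Subtype.ext_iff.1 hij)⟩,
      ⟨restrA a s.1, s.2.2⟩) with hΦ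
  have hinj : Function.Injective Φ := by
    rintro ⟨σ, h1, hq⟩ ⟨σ', h1', hq'⟩ heq
    simp only [hΦ, Prod.mk.injEq, Subtype.mk.injEq] at heq
    obtain ⟨hemb, hA⟩ := heq
    have hv : ∀ i : Fin (a-1), (σ ^ ((i : ℕ)+1)) 0 = (σ' ^ ((i : ℕ)+1)) 0 := by
      intro i
      have := congrFun (congrArg (fun (e : Fin (a-1) ↪ D) => (e : Fin (a-1) → D)) hemb) i
      exact Subtype.ext_iff.1 this
    have hpow : ∀ m, m < a → (σ ^ m) 0 = (σ' ^ m) 0 := by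
      intro m hm
      rcases Nat.eq_zero_or_pos m with rfl | hmpos
      · simp
      · have h' := hv ⟨m - 1, by omega⟩
        simpa [show m - 1 + 1 = m by omega] using h'
    have hO : Oset σ = Oset σ' := by
      apply Finset.ext
      intro x
      rw [mem_Oset, mem_Oset, h1, h1']
      constructor
      · rintro ⟨m, hm, rfl⟩; exact ⟨m, hm, (hpow m hm).symm⟩
      · rintro ⟨m, hm, rfl⟩; exact ⟨m, hm, hpow m hm⟩
    have hC : Cset σ = Cset σ' := by rw [Cset, Cset, hO]
    have hca : (Cset σ).card = N - a := by rw [Cset_card, h1]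
    have hca' : (Cset σ').card = N - a := by rw [Cset_card, h1']
    apply Subtype.ext
    apply Equiv.ext
    intro x
    by_cases hx : x ∈ Oset σ
    · obtain ⟨m, hm, rfl⟩ := mem_Oset.1 hx
      rw [h1] at hm
      have e1 : σ ((σ ^ m) 0) = (σ ^ (m+1)) 0 := by
        rw [pow_succ', Equiv.Perm.mul_apply]
      have e2 : σ' ((σ ^ m) 0) = (σ' ^ (m+1)) 0 := by
        rw [hpow m hm, pow_succ', Equiv.Perm.mul_apply]
      rw [e1, e2]
      rcases Nat.lt_or_ge (m+1) a with hma | hma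
      · exact hpow (m+1) hma
      · have hma' : m + 1 = a := by omega
        have ha1 : (σ ^ (m+1)) 0 = 0 := by rw [hma', ← h1]; exact pow_mp_zero σ
        have ha2 : (σ' ^ (m+1)) 0 = 0 := by rw [hma', ← h1']; exact pow_mp_zero σ'
        rw [ha1, ha2]
    · have hxC : x ∈ Cset σ := by rwa [Cset, Finset.mem_compl]
      have hrange := Finset.range_orderEmbOfFin (Cset σ) hca
      have : x ∈ Set.range ((Cset σ).orderEmbOfFin hca) := by
        rw [hrange]; exact_mod_cast hxC
      obtain ⟨y, rfl⟩ := this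
      rw [apply_orderEmbOfFin σ h1 hca y, hA]
      rw [emb_congr hC hca hca']
      rw [← apply_orderEmbOfFin σ' h1' hca' y]
  calc Nat.card {σ : Equiv.Perm (Fin N) //
        Function.minimalPeriod (⇑σ) 0 = a ∧ Q (restrA a σ)}
      ≤ Nat.card ((Fin (a-1) ↪ D) × {τ : Equiv.Perm (Fin (N - a)) // Q τ}) :=
        Nat.card_le_card_of_injective Φ hinj
    _ = (N-1).descFactorial (a-1) * Nat.card {τ : Equiv.Perm (Fin (N - a)) // Q τ} := by
        rw [Nat.card_prod]
        congr 1
        rw [Nat.card_eq_fintype_card, Fintype.card_embedding_eq]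
        have hD : Fintype.card D = N - 1 := by
          simp [D]
        rw [hD, Fintype.card_fin]


lemma list_len_le_sum : ∀ (u : List ℕ), (∀ x ∈ u, 1 ≤ x) → u.length ≤ u.sum := by
  intro u
  induction u with
  | nil => simp
  | cons x t ih =>
      intro h
      simp only [List.length_cons, List.sum_cons]
      have h1 : 1 ≤ x := h x (by simp)
      have h2 := ih (fun y hy => h y (by simp [hy]))
      omega

lemma card_cover (l k : ℕ) :
    Nat.card {σ : Equiv.Perm (Fin N) //
        l + 1 + 1 ≤ (OCS σ).length ∧ ((OCS σ).take (l+1+1)).sum = k} ≤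
      ∑ a ∈ Finset.Ico 1 k, Nat.card {σ : Equiv.Perm (Fin N) //
        Function.minimalPeriod (⇑σ) 0 = a ∧
          (l + 1 ≤ (OCS (restrA a σ)).length ∧ ((OCS (restrA a σ)).take (l+1)).sum = k - a)} := by
  classical
  set Pa : ℕ → Equiv.Perm (Fin N) → Prop := fun a σ =>
    Function.minimalPeriod (⇑σ) 0 = a ∧
      (l + 1 ≤ (OCS (restrA a σ)).length ∧ ((OCS (restrA a σ)).take (l+1)).sum = k - a)
    with hPa
  have key : ∀ (σ : Equiv.Perm (Fin N)),
      (l + 1 + 1 ≤ (OCS σ).length ∧ ((OCS σ).take (l+1+1)).sum = k) →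
      Function.minimalPeriod (⇑σ) 0 ∈ Finset.Ico 1 k ∧ Pa (Function.minimalPeriod (⇑σ) 0) σ := by
    intro σ hσ
    obtain ⟨hlen, hsum⟩ := hσ
    set a := Function.minimalPeriod (⇑σ) 0 with hadef
    have hOCS : OCS σ = a :: OCS (restrA a σ) := OCS_restrA σ rfl
    rw [hOCS, List.length_cons] at hlen
    rw [hOCS, List.take_succ_cons, List.sum_cons] at hsum
    have hlen' : l + 1 ≤ (OCS (restrA a σ)).length := by omega
    have hsumtake : l + 1 ≤ ((OCS (restrA a σ)).take (l+1)).sum := by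
      have hlt : ((OCS (restrA a σ)).take (l+1)).length = l + 1 := by
        rw [List.length_take]
        omega
      have := list_len_le_sum ((OCS (restrA a σ)).take (l+1))
        (fun x hx => OCS_entries_pos (List.mem_of_mem_take hx))
      omega
    have ha1 : 1 ≤ a := mp_pos' σ 0
    exact ⟨Finset.mem_Ico.2 ⟨ha1, by omega⟩, rfl, hlen', by omega⟩
  set Φ : {σ : Equiv.Perm (Fin N) //
      l + 1 + 1 ≤ (OCS σ).length ∧ ((OCS σ).take (l+1+1)).sum = k} →
      Σ a : (Finset.Ico 1 k : Finset ℕ), {σ : Equiv.Perm (Fin N) // Pa (a : ℕ) σ} :=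
    fun s => ⟨⟨Function.minimalPeriod (⇑s.1) 0, (key s.1 s.2).1⟩, ⟨s.1, (key s.1 s.2).2⟩⟩
    with hΦdef
  have hΦ : Function.Injective Φ := by
    intro s t hst
    apply Subtype.ext
    have := congrArg (fun x : Σ a : (Finset.Ico 1 k : Finset ℕ),
        {σ : Equiv.Perm (Fin N) // Pa (a : ℕ) σ} => (x.2.1 : Equiv.Perm (Fin N))) hst
    exact this
  calc Nat.card {σ : Equiv.Perm (Fin N) //
        l + 1 + 1 ≤ (OCS σ).length ∧ ((OCS σ).take (l+1+1)).sum = k}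
      ≤ Nat.card (Σ a : (Finset.Ico 1 k : Finset ℕ),
          {σ : Equiv.Perm (Fin N) // Pa (a : ℕ) σ}) := Nat.card_le_card_of_injective Φ hΦ
    _ = ∑ a : (Finset.Ico 1 k : Finset ℕ), Nat.card {σ : Equiv.Perm (Fin N) // Pa (a : ℕ) σ} := by
        rw [Nat.card_eq_fintype_card, Fintype.card_sigma]
        apply Finset.sum_congr rfl
        intro a _
        rw [Nat.card_eq_fintype_card]
    _ = ∑ a ∈ Finset.Ico 1 k, Nat.card {σ : Equiv.Perm (Fin N) // Pa a σ} :=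
      by exact Finset.sum_coe_sort (Finset.Ico 1 k)
          (fun a => Nat.card {σ : Equiv.Perm (Fin N) // Pa a σ})
    _ = ∑ a ∈ Finset.Ico 1 k, Nat.card {σ : Equiv.Perm (Fin N) //
        Function.minimalPeriod (⇑σ) 0 = a ∧
          (l + 1 ≤ (OCS (restrA a σ)).length ∧ ((OCS (restrA a σ)).take (l+1)).sum = k - a)} := rfl

end


lemma two_term (x y : ℝ) (hx : 0 ≤ x) (hy : 0 ≤ y) (n : ℕ) :
    y^(n+1) + (n+1) * x * y^n ≤ (y+x)^(n+1) := by
  rcases eq_or_lt_of_le hy with rfl | hy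
  · cases n with
    | zero => simp
    | succ m =>
        rw [zero_pow (Nat.succ_ne_zero _), zero_pow (Nat.succ_ne_zero _), zero_add]
        rw [show (0:ℝ) + x = x by ring]
        have h1 : (0:ℝ) ≤ x^(m+2) := by positivity
        simp only [mul_zero]
        linarith
  · have hyne : y ≠ 0 := ne_of_gt hy
    have hd : (0:ℝ) ≤ x / y := div_nonneg hx hy.le
    have h := one_add_mul_le_pow (a := x / y) (by linarith) (n+1)
    have h2 := mul_le_mul_of_nonneg_right h (le_of_lt (pow_pos hy (n+1)))
    have key : (1 + x/y)^(n+1) * y^(n+1) = (y+x)^(n+1) := by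
      rw [← mul_pow]
      congr 1
      field_simp
    rw [key] at h2
    refine le_trans (le_of_eq ?_) h2
    have hys : y^(n+1) = y^n * y := pow_succ y n
    field_simp
    push_cast
    ring

lemma abel_tail (x : ℕ → ℝ) (l k : ℕ) (hx : ∀ i, i < k → 0 ≤ x i) : ∀ d j, k - j ≤ d →
    (l+1 : ℝ) * ∑ a ∈ Finset.Ico j k, x a * (∑ s ∈ Finset.Ico (a+1) k, x s)^l ≤
      (∑ s ∈ Finset.Ico j k, x s)^(l+1) := by
  intro d
  induction d with
  | zero =>
      intro j hj
      have : Finset.Ico j k = ∅ := Finset.Ico_eq_empty (by omega)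
      rw [this]
      simp
  | succ d ih =>
      intro j hj
      rcases Nat.lt_or_ge j k with hjk | hjk
      · rw [Finset.sum_eq_sum_Ico_succ_bot hjk, Finset.sum_eq_sum_Ico_succ_bot hjk]
        have hT : (0:ℝ) ≤ ∑ s ∈ Finset.Ico (j+1) k, x s :=
          Finset.sum_nonneg fun i hi => hx i (Finset.mem_Ico.1 hi).2
        have h1 := ih (j+1) (by omega)
        have h2 := two_term (x j) (∑ s ∈ Finset.Ico (j+1) k, x s) (hx j hjk) hT l
        calc (l+1 : ℝ) * (x j * (∑ s ∈ Finset.Ico (j+1) k, x s)^l +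
              ∑ a ∈ Finset.Ico (j+1) k, x a * (∑ s ∈ Finset.Ico (a+1) k, x s)^l)
            = (l+1 : ℝ) * x j * (∑ s ∈ Finset.Ico (j+1) k, x s)^l +
              (l+1 : ℝ) * ∑ a ∈ Finset.Ico (j+1) k, x a * (∑ s ∈ Finset.Ico (a+1) k, x s)^l := by
              ring
          _ ≤ (l+1 : ℝ) * x j * (∑ s ∈ Finset.Ico (j+1) k, x s)^l +
              (∑ s ∈ Finset.Ico (j+1) k, x s)^(l+1) := by linarith
          _ ≤ (x j + ∑ s ∈ Finset.Ico (j+1) k, x s)^(l+1) := by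
              have := h2
              rw [add_comm (∑ s ∈ Finset.Ico (j+1) k, x s) (x j)] at this
              linarith
      · have : Finset.Ico j k = ∅ := Finset.Ico_eq_empty (by omega)
        rw [this]
        simp

noncomputable def Hsum (N k : ℕ) : ℝ := ∑ s ∈ Finset.Ico 1 k, ((N:ℝ) - s)⁻¹

lemma Hsum_nonneg (N k : ℕ) (hk : k ≤ N) : 0 ≤ Hsum N k := by
  apply Finset.sum_nonneg
  intro s hs
  rw [Finset.mem_Ico] at hs
  have h1 : (s:ℝ) < (N:ℝ) := by exact_mod_cast hs.2.trans_le hk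
  have h2 : (0:ℝ) < (N:ℝ) - s := by linarith
  positivity

lemma Hsum_shift (N k a : ℕ) (ha : a ≤ k) (hk : k ≤ N) :
    Hsum (N - a) (k - a) = ∑ s ∈ Finset.Ico (a+1) k, ((N:ℝ) - s)⁻¹ := by
  rw [Hsum, Finset.sum_Ico_eq_sum_range, Finset.sum_Ico_eq_sum_range]
  rw [show k - a - 1 = k - (a+1) by omega]
  apply Finset.sum_congr rfl
  intro i hi
  congr 1
  have hNa : ((N - a : ℕ) : ℝ) = (N:ℝ) - a := by
    rw [Nat.cast_sub (le_trans ha hk)]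
  rw [hNa]
  push_cast
  ring

lemma abel_final (N k l : ℕ) (hk : k ≤ N) :
    (l+1:ℝ) * ∑ a ∈ Finset.Ico 1 k, ((N:ℝ) - a)⁻¹ * (Hsum (N-a) (k-a))^l ≤
      (Hsum N k)^(l+1) := by
  have hcongr : ∀ a ∈ Finset.Ico 1 k, ((N:ℝ)-a)⁻¹ * (Hsum (N-a) (k-a))^l =
      ((N:ℝ)-a)⁻¹ * (∑ s ∈ Finset.Ico (a+1) k, ((N:ℝ) - s)⁻¹)^l := by
    intro a ha
    rw [Hsum_shift N k a (le_of_lt (Finset.mem_Ico.1 ha).2) hk]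
  rw [Finset.sum_congr rfl hcongr]
  have hx : ∀ i, i < k → 0 ≤ ((N:ℝ) - i)⁻¹ := by
    intro i hi
    have h1 : (i:ℝ) < (N:ℝ) := by exact_mod_cast lt_of_lt_of_le hi hk
    have h2 : (0:ℝ) < (N:ℝ) - i := by linarith
    positivity
  exact abel_tail (fun s => ((N:ℝ) - s)⁻¹) l k hx (k+1) 1 (by omega)

lemma Hsum_le_neg_log (N k : ℕ) (hN : 1 ≤ N) (hk : k ≤ N - 1) :
    Hsum N k ≤ -Real.log (1 - (k:ℝ)/N) := by
  have hN0 : (0:ℝ) < N := by exact_mod_cast hN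
  have hkN' : k < N := by omega
  have hkN : (k:ℝ) < N := by exact_mod_cast hkN'
  have hlog : -Real.log (1 - (k:ℝ)/N) = Real.log N - Real.log ((N:ℝ) - k) := by
    rw [show (1 - (k:ℝ)/N) = ((N:ℝ) - k)/N by field_simp]
    rw [Real.log_div (by linarith) (by linarith)]
    ring
  rw [hlog, Hsum]
  rcases Nat.eq_zero_or_pos k with rfl | hk0
  · simp
  set g : ℕ → ℝ := fun j => Real.log ((N:ℝ) - 1 - j) with hg
  have hterm : ∀ j ∈ Finset.range (k-1), ((N:ℝ) - (1+j))⁻¹ ≤ g j - g (j+1) := by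
    intro j hj
    rw [Finset.mem_range] at hj
    set m : ℝ := (N:ℝ) - 1 - j with hm
    have hm2 : (2:ℝ) ≤ m := by
      have hj' : (j:ℝ) ≤ (k:ℝ) - 2 := by
        have : (j:ℕ) ≤ k - 2 := by omega
        have h2 : ((j:ℕ):ℝ) ≤ ((k-2 : ℕ):ℝ) := by exact_mod_cast this
        have h3 : ((k-2:ℕ):ℝ) = (k:ℝ) - 2 := by
          rw [Nat.cast_sub (by omega)]
          norm_num
        linarith [h3 ▸ h2]
      have hkr : (k:ℝ) ≤ (N:ℝ) - 1 := by
        have : (k:ℕ) ≤ N - 1 := hk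
        have h2 : ((k:ℕ):ℝ) ≤ ((N-1:ℕ):ℝ) := by exact_mod_cast this
        have h3 : ((N-1:ℕ):ℝ) = (N:ℝ) - 1 := by
          rw [Nat.cast_sub (by omega)]
          norm_num
        linarith [h3 ▸ h2]
      simp only [hm]
      linarith
    have hm0 : (0:ℝ) < m := by linarith
    have hm1 : (0:ℝ) < m - 1 := by linarith
    have hlb := Real.log_le_sub_one_of_pos (show (0:ℝ) < (m-1)/m by positivity)
    rw [Real.log_div (by linarith) (by linarith)] at hlb
    have hfrac : (m-1)/m - 1 = -(1/m) := by field_simp; ring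
    rw [hfrac] at hlb
    have hgj : g j = Real.log m := rfl
    have hgj1 : g (j+1) = Real.log (m - 1) := by
      simp only [hg, hm]
      congr 1
      push_cast
      ring
    rw [hgj, hgj1]
    have hinv : ((N:ℝ) - (1+j))⁻¹ = 1/m := by
      rw [hm]
      rw [one_div]
      congr 1
      push_cast
      ring
    rw [hinv]
    linarith
  have htel : ∑ j ∈ Finset.range (k-1), (g j - g (j+1)) = g 0 - g (k-1) :=
    Finset.sum_range_sub' g (k-1)
  have hsum1 : ∑ s ∈ Finset.Ico 1 k, ((N:ℝ) - s)⁻¹ =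
      ∑ j ∈ Finset.range (k-1), ((N:ℝ) - (1+j))⁻¹ := by
    rw [Finset.sum_Ico_eq_sum_range]
    apply Finset.sum_congr rfl
    intro i _
    congr 1
    push_cast
    ring
  have hle : ∑ s ∈ Finset.Ico 1 k, ((N:ℝ) - s)⁻¹ ≤ g 0 - g (k-1) := by
    rw [hsum1, ← htel]
    exact Finset.sum_le_sum hterm
  have hg0 : g 0 = Real.log ((N:ℝ) - 1) := by simp [hg]
  have hgk : g (k-1) = Real.log ((N:ℝ) - k) := by
    simp only [hg]
    congr 1
    have : ((k-1:ℕ):ℝ) = (k:ℝ) - 1 := by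
      rw [Nat.cast_sub (by omega)]
      norm_num
    rw [this]
    ring
  have hN2 : (2:ℝ) ≤ (N:ℝ) := by exact_mod_cast (show 2 ≤ N by omega)
  have hmono : Real.log ((N:ℝ) - 1) ≤ Real.log N := by
    apply Real.log_le_log (by linarith)
    linarith
  rw [hg0, hgk] at hle
  linarith

lemma nat_desc_fact (N a : ℕ) (ha : 1 ≤ a) (haN : a ≤ N) :
    (N-1).descFactorial (a-1) * (N - a).factorial = (N-1).factorial := by
  have h := Nat.factorial_mul_descFactorial (show a - 1 ≤ N - 1 by omega)
  rw [show N - 1 - (a-1) = N - a by omega] at h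
  rw [mul_comm]
  exact h

lemma main_bound : ∀ l N k : ℕ, 1 ≤ N → k ≤ N - 1 →
    (Nat.card {σ : Equiv.Perm (Fin N) //
        l + 1 ≤ (OCS σ).length ∧ ((OCS σ).take (l + 1)).sum = k} : ℝ)
      ≤ (N.factorial : ℝ) * (Hsum N k)^l / (l.factorial * N) := by
  intro l
  induction l with
  | zero =>
      intro N k hN hk
      haveI : NeZero N := ⟨by omega⟩
      have hiff : ∀ σ : Equiv.Perm (Fin N),
          (0 + 1 ≤ (OCS σ).length ∧ ((OCS σ).take (0 + 1)).sum = k) ↔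
            Function.minimalPeriod (⇑σ) 0 = k := by
        intro σ
        rw [OCS_restrA σ rfl]
        simp
      have hcard : Nat.card {σ : Equiv.Perm (Fin N) //
          0 + 1 ≤ (OCS σ).length ∧ ((OCS σ).take (0 + 1)).sum = k} =
          Nat.card {σ : Equiv.Perm (Fin N) // Function.minimalPeriod (⇑σ) 0 = k} :=
        Nat.card_congr (Equiv.subtypeEquivRight hiff)
      rw [hcard]
      have hRHS : (N.factorial : ℝ) * (Hsum N k)^0 / ((Nat.factorial 0 : ℝ) * N) =
          ((N-1).factorial : ℝ) := by
        rw [pow_zero, Nat.factorial_zero]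
        have hNfac : (N.factorial : ℝ) = (N : ℝ) * ((N-1).factorial : ℝ) := by
          rw [← Nat.cast_mul, Nat.mul_factorial_pred (by omega)]
        rw [hNfac]
        have hN0 : (N:ℝ) ≠ 0 := Nat.cast_ne_zero.2 (by omega)
        field_simp
        norm_num
      rw [hRHS]
      rcases Nat.eq_zero_or_pos k with rfl | hk0
      · have : IsEmpty {σ : Equiv.Perm (Fin N) // Function.minimalPeriod (⇑σ) 0 = 0} := by
          constructor
          rintro ⟨σ, hσ⟩
          have := mp_pos' σ (0 : Fin N)
          omega
        rw [Nat.card_of_isEmpty]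
        exact_mod_cast Nat.zero_le ((N-1).factorial)
      · have h1 : Nat.card {σ : Equiv.Perm (Fin N) // Function.minimalPeriod (⇑σ) 0 = k} =
            Nat.card {σ : Equiv.Perm (Fin N) // Function.minimalPeriod (⇑σ) 0 = k ∧
              True} :=
          Nat.card_congr (Equiv.subtypeEquivRight (fun σ => by simp))
        rw [h1]
        have h2 : Nat.card {σ : Equiv.Perm (Fin N) // Function.minimalPeriod (⇑σ) 0 = k ∧ True} ≤
            (N-1).descFactorial (k-1) *
              Nat.card {τ : Equiv.Perm (Fin (N - k)) // True} :=
          card_mp_and (N := N) k hk0 (fun _ => True)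
        have h3 : Nat.card {τ : Equiv.Perm (Fin (N - k)) // True} =
            (N - k).factorial := by
          rw [Nat.card_congr (Equiv.subtypeUnivEquiv (fun _ => trivial)),
            Nat.card_eq_fintype_card, Fintype.card_perm, Fintype.card_fin]
        rw [h3] at h2
        have h4 : (N-1).descFactorial (k-1) * (N - k).factorial = (N-1).factorial :=
          nat_desc_fact N k hk0 (by omega)
        have h5 : Nat.card {σ : Equiv.Perm (Fin N) // Function.minimalPeriod (⇑σ) 0 = k ∧
              True} ≤ (N-1).factorial := by
          omega
        exact_mod_cast h5
  | succ l ih =>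
      intro N k hN hk
      haveI : NeZero N := ⟨by omega⟩
      have hcov := card_cover (N := N) l k
      -- per-a bound
      have hstep : ∀ a ∈ Finset.Ico 1 k,
          (Nat.card {σ : Equiv.Perm (Fin N) //
            Function.minimalPeriod (⇑σ) 0 = a ∧
              (l + 1 ≤ (OCS (restrA a σ)).length ∧
                ((OCS (restrA a σ)).take (l+1)).sum = k - a)} : ℝ) ≤
            ((N-1).factorial : ℝ) * (Hsum (N-a) (k-a))^l /
              ((l.factorial : ℝ) * ((N:ℝ) - a)) := by
        intro a ha
        rw [Finset.mem_Ico] at ha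
        obtain ⟨ha1, hak⟩ := ha
        have hNa1 : 1 ≤ N - a := by omega
        have hka : k - a ≤ (N - a) - 1 := by omega
        have hc := card_mp_and (N := N) a ha1
          (fun τ => l + 1 ≤ (OCS τ).length ∧ ((OCS τ).take (l+1)).sum = k - a)
        have hiha := ih (N - a) (k - a) hNa1 hka
        have hcast : ((N - a : ℕ) : ℝ) = (N:ℝ) - a := by
          rw [Nat.cast_sub (by omega)]
        calc (Nat.card {σ : Equiv.Perm (Fin N) //
            Function.minimalPeriod (⇑σ) 0 = a ∧
              (l + 1 ≤ (OCS (restrA a σ)).length ∧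
                ((OCS (restrA a σ)).take (l+1)).sum = k - a)} : ℝ)
            ≤ ((N-1).descFactorial (a-1) : ℝ) *
              (Nat.card {τ : Equiv.Perm (Fin (N - a)) //
                l + 1 ≤ (OCS τ).length ∧ ((OCS τ).take (l+1)).sum = k - a} : ℝ) := by
              exact_mod_cast hc
          _ ≤ ((N-1).descFactorial (a-1) : ℝ) *
              (((N-a).factorial : ℝ) * (Hsum (N-a) (k-a))^l /
                ((l.factorial : ℝ) * ((N - a : ℕ) : ℝ))) := by
              apply mul_le_mul_of_nonneg_left _ (by positivity)
              rw [hcast] at hiha ⊢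
              exact hiha
          _ = ((N-1).factorial : ℝ) * (Hsum (N-a) (k-a))^l /
              ((l.factorial : ℝ) * ((N:ℝ) - a)) := by
              have hfac : ((N-1).descFactorial (a-1) : ℝ) * ((N-a).factorial : ℝ) =
                  ((N-1).factorial : ℝ) := by
                exact_mod_cast congrArg (fun n : ℕ => (n : ℝ))
                  (nat_desc_fact N a ha1 (by omega))
              rw [hcast, ← hfac]
              ring
      -- combine
      have hsum : (Nat.card {σ : Equiv.Perm (Fin N) //
          l + 1 + 1 ≤ (OCS σ).length ∧ ((OCS σ).take (l + 1 + 1)).sum = k} : ℝ) ≤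
          ∑ a ∈ Finset.Ico 1 k, ((N-1).factorial : ℝ) * (Hsum (N-a) (k-a))^l /
            ((l.factorial : ℝ) * ((N:ℝ) - a)) := by
        calc (Nat.card {σ : Equiv.Perm (Fin N) //
            l + 1 + 1 ≤ (OCS σ).length ∧ ((OCS σ).take (l + 1 + 1)).sum = k} : ℝ)
            ≤ ((∑ a ∈ Finset.Ico 1 k, Nat.card {σ : Equiv.Perm (Fin N) //
              Function.minimalPeriod (⇑σ) 0 = a ∧
                (l + 1 ≤ (OCS (restrA a σ)).length ∧
                  ((OCS (restrA a σ)).take (l+1)).sum = k - a)} : ℕ) : ℝ) := by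
              exact_mod_cast hcov
          _ = ∑ a ∈ Finset.Ico 1 k, (Nat.card {σ : Equiv.Perm (Fin N) //
              Function.minimalPeriod (⇑σ) 0 = a ∧
                (l + 1 ≤ (OCS (restrA a σ)).length ∧
                  ((OCS (restrA a σ)).take (l+1)).sum = k - a)} : ℝ) := by
              push_cast
              rfl
          _ ≤ _ := Finset.sum_le_sum hstep
      have habel := abel_final N k l (by omega)
      have hfinal : ∑ a ∈ Finset.Ico 1 k, ((N-1).factorial : ℝ) * (Hsum (N-a) (k-a))^l /
            ((l.factorial : ℝ) * ((N:ℝ) - a)) ≤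
          (N.factorial : ℝ) * (Hsum N k)^(l+1) / (((l+1).factorial : ℝ) * N) := by
        have hrw : ∀ a ∈ Finset.Ico 1 k, ((N-1).factorial : ℝ) * (Hsum (N-a) (k-a))^l /
            ((l.factorial : ℝ) * ((N:ℝ) - a)) =
            (((N-1).factorial : ℝ) / (l.factorial : ℝ)) *
              (((N:ℝ) - a)⁻¹ * (Hsum (N-a) (k-a))^l) := by
          intro a ha
          field_simp
        rw [Finset.sum_congr rfl hrw, ← Finset.mul_sum]
        have hl0 : (0:ℝ) < (l.factorial : ℝ) := by positivity
        have hsum_le : ∑ a ∈ Finset.Ico 1 k, ((N:ℝ) - a)⁻¹ * (Hsum (N-a) (k-a))^l ≤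
            (Hsum N k)^(l+1) / (l+1 : ℝ) := by
          rw [le_div_iff₀ (by positivity)]
          linarith [habel]
        have hnn : (0:ℝ) ≤ ((N-1).factorial : ℝ) / (l.factorial : ℝ) := by positivity
        calc (((N-1).factorial : ℝ) / (l.factorial : ℝ)) *
              ∑ a ∈ Finset.Ico 1 k, ((N:ℝ) - a)⁻¹ * (Hsum (N-a) (k-a))^l
            ≤ (((N-1).factorial : ℝ) / (l.factorial : ℝ)) *
              ((Hsum N k)^(l+1) / (l+1 : ℝ)) := mul_le_mul_of_nonneg_left hsum_le hnn
          _ = (N.factorial : ℝ) * (Hsum N k)^(l+1) / (((l+1).factorial : ℝ) * N) := by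
              have hNfac : (N.factorial : ℝ) = (N : ℝ) * ((N-1).factorial : ℝ) := by
                rw [← Nat.cast_mul, Nat.mul_factorial_pred (by omega)]
              have hlfac : (((l+1).factorial : ℕ) : ℝ) = ((l:ℝ)+1) * (l.factorial : ℝ) := by
                rw [Nat.factorial_succ]
                push_cast
                ring
              rw [hNfac, hlfac]
              have hN0 : (N:ℝ) ≠ 0 := Nat.cast_ne_zero.2 (by omega)
              field_simp
      have hpow : (Hsum N k)^(l+1) = (Hsum N k)^(l+1) := rfl
      calc (Nat.card {σ : Equiv.Perm (Fin N) //
          l + 1 + 1 ≤ (OCS σ).length ∧ ((OCS σ).take (l + 1 + 1)).sum = k} : ℝ)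
          ≤ ∑ a ∈ Finset.Ico 1 k, ((N-1).factorial : ℝ) * (Hsum (N-a) (k-a))^l /
            ((l.factorial : ℝ) * ((N:ℝ) - a)) := hsum
        _ ≤ (N.factorial : ℝ) * (Hsum N k)^(l+1) / (((l+1).factorial : ℝ) * N) := hfinal


/-- For a uniformly random permutation of `{0,…,N−1}` and `l ≤ N−1`: for
`k ∈ {l+1,…,N−1}` the probability that the ordered cycle structure has at least `l+1`
entries whose sum `s_l` equals `k` is at most `(−log(1−k/N))^l / (l!·N)`; moreover this
probability is `0` whenever `k ≤ l`. -/
theorem stmt_9 (N l : ℕ) (hN : 1 ≤ N) (hl : l ≤ N - 1) :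
    (∀ k : ℕ, l + 1 ≤ k → k ≤ N - 1 →
      (Nat.card {σ : Equiv.Perm (Fin N) //
            l + 1 ≤ (OCS σ).length ∧ ((OCS σ).take (l + 1)).sum = k} : ℝ)
          / (Nat.factorial N : ℝ)
        ≤ (-Real.log (1 - (k : ℝ) / N)) ^ l / ((Nat.factorial l : ℝ) * N)) ∧
    (∀ k : ℕ, k ≤ l →
      (Nat.card {σ : Equiv.Perm (Fin N) //
            l + 1 ≤ (OCS σ).length ∧ ((OCS σ).take (l + 1)).sum = k} : ℝ)
          / (Nat.factorial N : ℝ) = 0) := by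
  constructor
  · intro k hk1 hk2
    have hb := main_bound l N k hN hk2
    have hfac0 : (0:ℝ) < (N.factorial : ℝ) := by positivity
    have hN0 : (0:ℝ) < (N:ℝ) := by exact_mod_cast hN
    have hden : (0:ℝ) < (l.factorial : ℝ) * N := by positivity
    have h1 : (Nat.card {σ : Equiv.Perm (Fin N) //
            l + 1 ≤ (OCS σ).length ∧ ((OCS σ).take (l + 1)).sum = k} : ℝ)
          / (Nat.factorial N : ℝ) ≤ (Hsum N k)^l / ((l.factorial : ℝ) * N) := by
      have h2 := (div_le_div_iff_of_pos_right hfac0).2 hb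
      have h3 : (N.factorial : ℝ) * (Hsum N k)^l / ((l.factorial : ℝ) * N) /
          (N.factorial : ℝ) = (Hsum N k)^l / ((l.factorial : ℝ) * N) := by
        field_simp
      rw [h3] at h2
      exact h2
    have hHnn : 0 ≤ Hsum N k := Hsum_nonneg N k (by omega)
    have hHle : Hsum N k ≤ -Real.log (1 - (k:ℝ)/N) := Hsum_le_neg_log N k hN hk2
    have hpow : (Hsum N k)^l ≤ (-Real.log (1 - (k:ℝ)/N))^l :=
      pow_le_pow_left₀ hHnn hHle l
    have h4 : (Hsum N k)^l / ((l.factorial : ℝ) * N) ≤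
        (-Real.log (1 - (k:ℝ)/N))^l / ((l.factorial : ℝ) * N) :=
      (div_le_div_iff_of_pos_right hden).2 hpow
    linarith
  · intro k hk
    have hempty : IsEmpty {σ : Equiv.Perm (Fin N) //
        l + 1 ≤ (OCS σ).length ∧ ((OCS σ).take (l + 1)).sum = k} := by
      constructor
      rintro ⟨σ, hlen, hsum⟩
      have hlt : ((OCS σ).take (l+1)).length = l + 1 := by
        rw [List.length_take]
        omega
      have := list_len_le_sum ((OCS σ).take (l+1))
        (fun x hx => OCS_entries_pos (List.mem_of_mem_take hx))
      omega
    rw [Nat.card_of_isEmpty]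
    norm_num
end

section
/- Fix a real constant c > e². Let p(N) denote the probability that a uniformly random permutation of {0,…,N−1} has more than c·log N cycles (natural logarithm, fixed points counting as cycles). Then p(N) = o(1/N^c) as N → ∞. -/
open Asymptotics Filter

/-- The number of cycles of a permutation of `Fin N`, counting fixed points as cycles of
length 1 (one cycle per minimal element of a cycle). -/
noncomputable def cycleCount {N : ℕ} (σ : Equiv.Perm (Fin N)) : ℕ :=
  Nat.card {x : Fin N // ∀ m : ℕ, x ≤ (σ ^ m) x}

open Equiv Finset
open scoped Classical

section aux
variable {n : ℕ}

/-- `x` is minimal in its `σ`-orbit. -/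
def minl {N : ℕ} (σ : Equiv.Perm (Fin N)) (x : Fin N) : Prop := ∀ m : ℕ, x ≤ (σ ^ m) x

lemma cycleCount_eq_card (σ : Equiv.Perm (Fin n)) :
    cycleCount σ = (univ.filter (minl σ)).card := by
  rw [cycleCount, Nat.card_eq_fintype_card, Fintype.card_subtype]
  congr 1

lemma minl_zero (σ : Equiv.Perm (Fin (n+1))) : minl σ 0 := fun _ => Fin.zero_le _

lemma pow_symm_zero (e : Equiv.Perm (Fin n)) (m : ℕ) (x : Fin n) :
    ((Equiv.Perm.decomposeFin.symm (0, e)) ^ m) x.succ = ((e ^ m) x).succ := by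
  induction m generalizing x with
  | zero => simp
  | succ m ih =>
    rw [pow_succ, pow_succ, Equiv.Perm.mul_apply, Equiv.Perm.mul_apply,
      Equiv.Perm.decomposeFin_symm_apply_succ]
    rw [Equiv.swap_self, Equiv.refl_apply, ih]

lemma minl_succ_iff_zero (e : Equiv.Perm (Fin n)) (x : Fin n) :
    minl (Equiv.Perm.decomposeFin.symm (0, e)) x.succ ↔ minl e x := by
  unfold minl
  refine forall_congr' fun m => ?_
  rw [pow_symm_zero, Fin.succ_le_succ_iff]

lemma cycleCount_symm_zero (e : Equiv.Perm (Fin n)) :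
    cycleCount (Equiv.Perm.decomposeFin.symm (0, e)) = cycleCount e + 1 := by
  rw [cycleCount_eq_card, cycleCount_eq_card, Fin.card_filter_univ_succ]
  rw [if_pos (minl_zero _)]
  congr 1
  apply congrArg
  apply Finset.filter_congr
  intro x _
  simpa using minl_succ_iff_zero e x

lemma apply_symm_succ (e : Equiv.Perm (Fin n)) (p' : Fin n) (x : Fin n) :
    (Equiv.Perm.decomposeFin.symm (p'.succ, e)) x.succ
      = if e x = p' then 0 else (e x).succ := by
  rw [Equiv.Perm.decomposeFin_symm_apply_succ]
  by_cases h : e x = p'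
  · rw [if_pos h, h, Equiv.swap_apply_right]
  · rw [if_neg h, Equiv.swap_apply_of_ne_of_ne (Fin.succ_ne_zero _)
      (fun hc => h (Fin.succ_injective _ hc))]

lemma pow_symm_succ (e : Equiv.Perm (Fin n)) (p' : Fin n) (x : Fin n) (m : ℕ)
    (h : ∀ i, 1 ≤ i → i ≤ m → (e ^ i) x ≠ p') :
    ((Equiv.Perm.decomposeFin.symm (p'.succ, e)) ^ m) x.succ = ((e ^ m) x).succ := by
  induction m with
  | zero => simp
  | succ m ih =>
    have hne : ¬ e ((e ^ m) x) = p' := by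
      have := h (m + 1) (Nat.succ_le_succ (Nat.zero_le m)) le_rfl
      rwa [pow_succ', Equiv.Perm.mul_apply] at this
    rw [pow_succ', pow_succ', Equiv.Perm.mul_apply, Equiv.Perm.mul_apply,
      ih (fun i h1 h2 => h i h1 (h2.trans (Nat.le_succ m))), apply_symm_succ, if_neg hne]

lemma pow_symm_of_not_sameCycle (e : Equiv.Perm (Fin n)) (p' : Fin n) (x : Fin n)
    (h : ¬ e.SameCycle x p') (m : ℕ) :
    ((Equiv.Perm.decomposeFin.symm (p'.succ, e)) ^ m) x.succ = ((e ^ m) x).succ := by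
  refine pow_symm_succ e p' x m fun i _ _ hi => h ⟨(i : ℤ), ?_⟩
  rw [zpow_natCast, hi]

lemma exists_pow_eq_zero_of_sameCycle (e : Equiv.Perm (Fin n)) (p' : Fin n) (x : Fin n)
    (h : e.SameCycle x p') :
    ∃ m : ℕ, ((Equiv.Perm.decomposeFin.symm (p'.succ, e)) ^ m) x.succ = 0 := by
  obtain ⟨j₀, hj₀, _, hje⟩ := h.exists_pow_eq''
  have hex : ∃ j, 1 ≤ j ∧ (e ^ j) x = p' := ⟨j₀, hj₀, hje⟩
  classical
  set j := Nat.find hex with hj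
  obtain ⟨hj1, hjp⟩ := Nat.find_spec hex
  refine ⟨j, ?_⟩
  obtain ⟨k, hk⟩ : ∃ k, j = k + 1 := ⟨j - 1, (Nat.succ_pred_eq_of_pos hj1).symm⟩
  have hk' : ∀ i, 1 ≤ i → i ≤ k → (e ^ i) x ≠ p' := by
    intro i h1 h2 hc
    exact absurd (And.intro h1 hc) (Nat.find_min hex (by omega))
  rw [hk, pow_succ', Equiv.Perm.mul_apply, pow_symm_succ e p' x k hk', apply_symm_succ,
    if_pos]
  have : (e ^ (k + 1)) x = p' := by rw [← hk]; exact hjp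
  rwa [pow_succ', Equiv.Perm.mul_apply] at this

lemma minl_succ_iff (e : Equiv.Perm (Fin n)) (p' : Fin n) (x : Fin n) :
    minl (Equiv.Perm.decomposeFin.symm (p'.succ, e)) x.succ
      ↔ minl e x ∧ ¬ e.SameCycle x p' := by
  constructor
  · intro h
    have hns : ¬ e.SameCycle x p' := by
      intro hs
      obtain ⟨m, hm⟩ := exists_pow_eq_zero_of_sameCycle e p' x hs
      have := h m
      rw [hm] at this
      exact absurd (Fin.le_zero_iff.mp this) (Fin.succ_ne_zero x)
    refine ⟨fun m => ?_, hns⟩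
    have := h m
    rw [pow_symm_of_not_sameCycle e p' x hns] at this
    exact Fin.succ_le_succ_iff.mp this
  · rintro ⟨h1, h2⟩ m
    rw [pow_symm_of_not_sameCycle e p' x h2]
    exact Fin.succ_le_succ_iff.mpr (h1 m)

lemma existsUnique_minl_sameCycle (e : Equiv.Perm (Fin n)) (p' : Fin n) :
    ∃! x : Fin n, minl e x ∧ e.SameCycle x p' := by
  classical
  have hne : (univ.filter (fun y => e.SameCycle p' y)).Nonempty :=
    ⟨p', by simp [Equiv.Perm.SameCycle.refl]⟩
  set S := univ.filter (fun y => e.SameCycle p' y)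
  set x₀ := S.min' hne with hx₀
  have hx₀S : x₀ ∈ S := S.min'_mem hne
  have hx₀c : e.SameCycle p' x₀ := (mem_filter.mp hx₀S).2
  have hminl : minl e x₀ := by
    intro m
    refine S.min'_le _ ?_
    simp only [S, mem_filter, mem_univ, true_and]
    exact hx₀c.trans ⟨(m : ℤ), by rw [zpow_natCast]⟩
  refine ⟨x₀, ⟨hminl, hx₀c.symm⟩, ?_⟩
  rintro y ⟨hy1, hy2⟩
  have hxy : e.SameCycle x₀ y := hx₀c.symm.trans hy2.symm
  obtain ⟨i, _, _, hi⟩ := hxy.exists_pow_eq''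
  obtain ⟨k, _, _, hk⟩ := hxy.symm.exists_pow_eq''
  refine le_antisymm ?_ ?_
  · have := hy1 k; rw [hk] at this; exact this
  · have := hminl i; rw [hi] at this; exact this

lemma cycleCount_symm_succ (e : Equiv.Perm (Fin n)) (p' : Fin n) :
    cycleCount (Equiv.Perm.decomposeFin.symm (p'.succ, e)) = cycleCount e := by
  have h0 : minl (Equiv.Perm.decomposeFin.symm (p'.succ, e)) 0 := fun _ => Fin.zero_le _
  rw [cycleCount_eq_card, cycleCount_eq_card, Fin.card_filter_univ_succ, if_pos h0]
  have hsplit : (univ.filter (minl e)).card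
      = ((univ.filter (minl e)).filter (fun x => e.SameCycle x p')).card
        + ((univ.filter (minl e)).filter (fun x => ¬ e.SameCycle x p')).card :=
    (Finset.card_filter_add_card_filter_not _).symm
  obtain ⟨x₀, hx₀, hx₀u⟩ := existsUnique_minl_sameCycle e p'
  have h1 : ((univ.filter (minl e)).filter (fun x => e.SameCycle x p')) = {x₀} := by
    ext y
    simp only [mem_filter, mem_univ, true_and, mem_singleton]
    constructor
    · rintro ⟨a, b⟩; exact hx₀u y ⟨a, b⟩
    · rintro rfl; exact hx₀
  have h2 : (univ.filter (fun x => minl (Equiv.Perm.decomposeFin.symm (p'.succ, e)) x.succ))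
      = ((univ.filter (minl e)).filter (fun x => ¬ e.SameCycle x p')) := by
    ext y
    simp only [mem_filter, mem_univ, true_and]
    rw [minl_succ_iff]
  rw [h2, hsplit, h1, Finset.card_singleton]
  omega

end aux

lemma sum_pow_cycleCount (x : ℝ) :
    ∀ n : ℕ, ∑ σ : Equiv.Perm (Fin n), x ^ cycleCount σ = ∏ i ∈ Finset.range n, (x + i) := by
  intro n
  induction n with
  | zero =>
    rw [Finset.range_zero, Finset.prod_empty]
    have h : ∀ σ : Equiv.Perm (Fin 0), cycleCount σ = 0 := by
      intro σ
      rw [cycleCount]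
      exact Nat.card_of_isEmpty
    simp [h]
  | succ n ih =>
    rw [Finset.prod_range_succ, ← ih]
    rw [← Equiv.sum_comp (Equiv.Perm.decomposeFin.symm :
        Fin (n+1) × Equiv.Perm (Fin n) ≃ Equiv.Perm (Fin (n+1)))
        (fun σ => x ^ cycleCount σ), Fintype.sum_prod_type]
    rw [Fin.sum_univ_succ]
    have h0 : ∑ e : Equiv.Perm (Fin n), x ^ cycleCount (Equiv.Perm.decomposeFin.symm (0, e))
        = x * ∑ e : Equiv.Perm (Fin n), x ^ cycleCount e := by
      rw [Finset.mul_sum]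
      refine Finset.sum_congr rfl fun e _ => ?_
      rw [cycleCount_symm_zero, pow_succ, mul_comm]
    have h1 : ∀ p' : Fin n,
        ∑ e : Equiv.Perm (Fin n), x ^ cycleCount (Equiv.Perm.decomposeFin.symm (p'.succ, e))
        = ∑ e : Equiv.Perm (Fin n), x ^ cycleCount e := by
      intro p'
      refine Finset.sum_congr rfl fun e _ => ?_
      rw [cycleCount_symm_succ]
    rw [h0]
    rw [Finset.sum_congr rfl (fun p' _ => h1 p')]
    rw [Finset.sum_const, Finset.card_univ, Fintype.card_fin]
    rw [nsmul_eq_mul]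
    ring

lemma prod_bound (x : ℝ) (hx : 1 ≤ x) (N : ℕ) :
    ∏ i ∈ Finset.range N, (x + i)
      ≤ (N.factorial : ℝ) * Real.exp ((x - 1) * (1 + Real.log N)) := by
  have h1 : ∏ i ∈ Finset.range N, (x + i)
      ≤ ∏ i ∈ Finset.range N, (((i : ℝ) + 1) * Real.exp ((x - 1) * (1 / ((i : ℝ) + 1)))) := by
    refine Finset.prod_le_prod (fun i _ => by positivity) (fun i _ => ?_)
    have hi : (0 : ℝ) < (i : ℝ) + 1 := by positivity
    have h := Real.add_one_le_exp ((x - 1) * (1 / ((i : ℝ) + 1)))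
    calc x + i = ((i : ℝ) + 1) * ((x - 1) * (1 / ((i : ℝ) + 1)) + 1) := by
          field_simp
          ring
      _ ≤ ((i : ℝ) + 1) * Real.exp ((x - 1) * (1 / ((i : ℝ) + 1))) :=
          mul_le_mul_of_nonneg_left h (le_of_lt hi)
  have h2 : ∏ i ∈ Finset.range N, (((i : ℝ) + 1) * Real.exp ((x - 1) * (1 / ((i : ℝ) + 1))))
      = (N.factorial : ℝ) * Real.exp ((x - 1) * (harmonic N : ℝ)) := by
    rw [Finset.prod_mul_distrib, ← Real.exp_sum]
    congr 1
    · rw [← Finset.prod_range_add_one_eq_factorial N]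
      push_cast
      rfl
    · congr 1
      rw [← Finset.mul_sum]
      congr 1
      rw [harmonic]
      push_cast
      simp [one_div]
  have h3 : (harmonic N : ℝ) ≤ 1 + Real.log N := harmonic_le_one_add_log N
  refine h1.trans (h2.le.trans ?_)
  have := Real.exp_le_exp.mpr (mul_le_mul_of_nonneg_left h3 (by linarith : (0:ℝ) ≤ x - 1))
  exact mul_le_mul_of_nonneg_left this (by positivity)

lemma key_bound (c : ℝ) (N : ℕ) (hN : 1 ≤ N) :
    (Nat.card {σ : Equiv.Perm (Fin N) // c * Real.log N < (cycleCount σ : ℝ)} : ℝ)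
      / (N.factorial : ℝ)
    ≤ Real.exp (Real.exp 2 - 1) * (N : ℝ) ^ (Real.exp 2 - 1 - 2 * c) := by
  classical
  set E := Real.exp 2 with hE
  have hE1 : (1 : ℝ) ≤ E := by
    rw [hE]
    calc (1:ℝ) = Real.exp 0 := Real.exp_zero.symm
      _ ≤ Real.exp 2 := Real.exp_le_exp.mpr (by norm_num)
  have hN0 : (0 : ℝ) < (N : ℝ) := by exact_mod_cast hN
  have hlogN : 0 ≤ Real.log N := Real.log_nonneg (by exact_mod_cast hN)
  have h2c : (0:ℝ) < (N : ℝ) ^ (2 * c) := Real.rpow_pos_of_pos hN0 _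
  have hfac : (0:ℝ) < (N.factorial : ℝ) := by exact_mod_cast N.factorial_pos
  set T := Finset.univ.filter
    (fun σ : Equiv.Perm (Fin N) => c * Real.log N < (cycleCount σ : ℝ)) with hT
  have hcard : (Nat.card {σ : Equiv.Perm (Fin N) // c * Real.log N < (cycleCount σ : ℝ)})
      = T.card := by
    rw [Nat.card_eq_fintype_card, Fintype.card_subtype, hT]
  have step1 : (T.card : ℝ) * (N : ℝ) ^ (2 * c) ≤ ∑ σ ∈ T, E ^ cycleCount σ := by
    have hconst : ∑ _σ ∈ T, (N : ℝ) ^ (2 * c) = (T.card : ℝ) * (N : ℝ) ^ (2 * c) := by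
      rw [Finset.sum_const, nsmul_eq_mul]
    rw [← hconst]
    refine Finset.sum_le_sum fun σ hσ => ?_
    have hσ' : c * Real.log N < (cycleCount σ : ℝ) := (Finset.mem_filter.mp hσ).2
    rw [Real.rpow_def_of_pos hN0, hE, ← Real.exp_nat_mul]
    exact Real.exp_le_exp.mpr (by nlinarith)
  have step2 : ∑ σ ∈ T, E ^ cycleCount σ ≤ ∑ σ : Equiv.Perm (Fin N), E ^ cycleCount σ :=
    Finset.sum_le_sum_of_subset_of_nonneg (Finset.subset_univ T)
      (fun σ _ _ => pow_nonneg (by positivity) _)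
  have chain : (T.card : ℝ) * (N : ℝ) ^ (2 * c)
      ≤ (N.factorial : ℝ) * Real.exp ((E - 1) * (1 + Real.log N)) :=
    step1.trans (step2.trans ((sum_pow_cycleCount E N).le.trans (prod_bound E hE1 N)))
  have hrhs : (N.factorial : ℝ) * Real.exp ((E - 1) * (1 + Real.log N))
      = (Real.exp (E - 1) * (N : ℝ) ^ (E - 1 - 2 * c) * (N.factorial : ℝ))
        * (N : ℝ) ^ (2 * c) := by
    have e1 : Real.exp ((E - 1) * (1 + Real.log N)) = Real.exp (E - 1) * (N : ℝ) ^ (E - 1) := by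
      rw [Real.rpow_def_of_pos hN0, ← Real.exp_add]
      ring_nf
    have e2 : (N : ℝ) ^ (E - 1 - 2 * c) * (N : ℝ) ^ (2 * c) = (N : ℝ) ^ (E - 1) := by
      rw [← Real.rpow_add hN0]
      ring_nf
    rw [e1, ← e2]
    ring
  rw [hcard, div_le_iff₀ hfac]
  rw [hrhs] at chain
  exact le_of_mul_le_mul_right chain h2c

/-- For a fixed constant `c > e²`, the probability that a uniformly random permutation of
`{0,…,N−1}` has more than `c·log N` cycles is `o(1/N^c)`. -/
theorem stmt_12 (c : ℝ) (hc : Real.exp 2 < c) :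
    (fun N : ℕ =>
        (Nat.card {σ : Equiv.Perm (Fin N) // c * Real.log N < (cycleCount σ : ℝ)} : ℝ)
          / (Nat.factorial N : ℝ))
      =o[atTop] (fun N : ℕ => 1 / (N : ℝ) ^ c) := by
  set E := Real.exp 2 with hE
  set a : ℝ := E - 1 - 2 * c with ha
  have hac : a + c < 0 := by
    have : (1:ℝ) ≤ E := by
      rw [hE]; calc (1:ℝ) = Real.exp 0 := Real.exp_zero.symm
        _ ≤ Real.exp 2 := Real.exp_le_exp.mpr (by norm_num)
    simp only [ha]; linarith
  have hO : (fun N : ℕ =>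
      (Nat.card {σ : Equiv.Perm (Fin N) // c * Real.log N < (cycleCount σ : ℝ)} : ℝ)
        / (Nat.factorial N : ℝ))
      =O[atTop] (fun N : ℕ => (N : ℝ) ^ a) := by
    rw [isBigO_iff]
    refine ⟨Real.exp (E - 1), ?_⟩
    filter_upwards [eventually_ge_atTop 1] with N hN
    have hb := key_bound c N hN
    have hnn : (0:ℝ) ≤ (Nat.card {σ : Equiv.Perm (Fin N) // c * Real.log N
        < (cycleCount σ : ℝ)} : ℝ) / (Nat.factorial N : ℝ) := by positivity
    simp only [Real.norm_eq_abs]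
    rw [abs_of_nonneg hnn, abs_of_nonneg (Real.rpow_nonneg (Nat.cast_nonneg N) a)]
    exact hb
  have ho : (fun N : ℕ => (N : ℝ) ^ a) =o[atTop] (fun N : ℕ => 1 / (N : ℝ) ^ c) := by
    rw [isLittleO_iff]
    intro ε hε
    have htend : Tendsto (fun N : ℕ => (N : ℝ) ^ (a + c)) atTop (nhds 0) :=
      (tendsto_rpow_neg_atTop (by linarith : 0 < -(a + c))).comp
        tendsto_natCast_atTop_atTop |>.congr (by intro N; simp)
    have hev : ∀ᶠ N : ℕ in atTop, (N : ℝ) ^ (a + c) < ε :=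
      htend.eventually_lt_const hε
    filter_upwards [hev, eventually_ge_atTop 1] with N hNe hN1
    have hN0 : (0:ℝ) < (N : ℝ) := by exact_mod_cast hN1
    have hcpos : (0:ℝ) < (N : ℝ) ^ c := Real.rpow_pos_of_pos hN0 c
    simp only [Real.norm_eq_abs]
    rw [abs_of_nonneg (Real.rpow_nonneg (Nat.cast_nonneg N) a),
      abs_of_nonneg (by positivity : (0:ℝ) ≤ 1 / (N : ℝ) ^ c)]
    have h1 : (N:ℝ) ^ (a + c) * (1 / (N:ℝ) ^ c) = (N:ℝ) ^ a := by
      rw [one_div, ← Real.rpow_neg hN0.le, ← Real.rpow_add hN0]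
      ring_nf
    rw [← h1]
    exact mul_le_mul_of_nonneg_right hNe.le (by positivity)
  exact hO.trans_isLittleO ho
end
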